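/- For every prime ℓ and every positive integer β < (√3/2)ℓ that is primitively represented by the Eisenstein norm form x² − xy + y² (i.e., β = a² − ab + b² with gcd(a,b) = 1), there exists an index-ℓ sublattice M of ℤ[ω] whose minimal nonzero squared length equals β and whose minimal vectors form exactly one pair ±v. -/

import Mathlib

/-- The primitive cube root of unity `ω = e^{2πi/3}`. -/
noncomputable def ω : ℂ := Complex.exp (2 * Real.pi * Complex.I / 3)
/-- The Eisenstein lattice `ℤ[ω] ⊂ ℂ`. -/
noncomputable def Eisenstein : AddSubgroup ℂ := AddSubgroup.closure {1, ω}

lemma ω_re : ω.re = -(1/2) := by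
  have : (2 * Real.pi * Complex.I / 3) = ((2 * Real.pi / 3 : ℝ) : ℂ) * Complex.I := by
    push_cast; ring
  rw [ω, this, Complex.exp_ofReal_mul_I_re]
  have h : (2 * Real.pi / 3) = Real.pi - Real.pi / 3 := by ring
  rw [h, Real.cos_pi_sub, Real.cos_pi_div_three]

lemma ω_im : ω.im = Real.sqrt 3 / 2 := by
  have : (2 * Real.pi * Complex.I / 3) = ((2 * Real.pi / 3 : ℝ) : ℂ) * Complex.I := by
    push_cast; ring
  rw [ω, this, Complex.exp_ofReal_mul_I_im]
  have h : (2 * Real.pi / 3) = Real.pi - Real.pi / 3 := by ring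
  rw [h, Real.sin_pi_sub, Real.sin_pi_div_three]

lemma normSq_eisen (x y : ℝ) : ‖((x:ℂ) + (y:ℂ) * ω)‖ ^ 2 = x^2 - x*y + y^2 := by
  have h3 : Real.sqrt 3 ^ 2 = 3 := Real.sq_sqrt (by norm_num)
  rw [Complex.sq_norm, Complex.normSq_apply]
  simp [Complex.add_re, Complex.add_im, Complex.mul_re, Complex.mul_im, ω_re, ω_im]
  nlinarith [h3]

/-- the integer-pair description of the Eisenstein lattice -/
lemma eisen_mem (x y : ℤ) : (x:ℂ) + (y:ℂ) * ω ∈ Eisenstein := by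
  rw [Eisenstein, AddSubgroup.mem_closure_pair]
  exact ⟨x, y, by push_cast [zsmul_eq_mul]; ring⟩

lemma eisen_elim {z : ℂ} (h : z ∈ Eisenstein) : ∃ x y : ℤ, z = (x:ℂ) + (y:ℂ) * ω := by
  rw [Eisenstein, AddSubgroup.mem_closure_pair] at h
  obtain ⟨m, n, hmn⟩ := h
  exact ⟨m, n, by rw [← hmn]; push_cast [zsmul_eq_mul]; ring⟩

lemma key_case1 (m a b β : ℤ) (hβ : 0 < β) (hβab : β = a^2 - a*b + b^2)
    (hm : 4 ≤ m^2) : β < (m*a)^2 - (m*a)*(m*b) + (m*b)^2 := by nlinarith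

lemma key_case2 (X Y a b n l β : ℤ) (hβ : 0 < β) (hβab : β = a^2 - a*b + b^2)
    (hcross : Y*a - X*b = n*l) (hn1 : 1 ≤ n^2) (hl : 4*β^2 < 3*l^2) :
    β < X^2 - X*Y + Y^2 := by
  have hq : 4*(X^2 - X*Y + Y^2)*β
      = (2*X*a - X*b - Y*a + 2*Y*b)^2 + 3*(n*l)^2 := by
    rw [hβab, ← hcross]; ring
  have h2 : 3*l^2 ≤ 3*(n*l)^2 := by
    nlinarith [mul_nonneg (sub_nonneg.mpr hn1) (sq_nonneg l)]
  have h3 : 3*(n*l)^2 ≤ 4*(X^2 - X*Y + Y^2)*β := by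
    nlinarith [sq_nonneg (2*X*a - X*b - Y*a + 2*Y*b)]
  nlinarith [h2, h3, hl, hβ]

lemma int_one_le_sq {n : ℤ} (hn : n ≠ 0) : 1 ≤ n^2 := by
  have := Int.one_le_abs hn
  nlinarith [sq_abs n]

lemma int_four_le_sq {m : ℤ} (h0 : m ≠ 0) (h1 : m ≠ 1) (h2 : m ≠ -1) : 4 ≤ m^2 := by
  have hm2 : 2 ≤ |m| := by
    rcases lt_or_ge m 0 with h | h
    · rw [abs_of_neg h]; omega
    · rw [abs_of_nonneg h]; omega
  nlinarith [sq_abs m]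

lemma beta_sq_bound {β l : ℕ} (h : (β : ℝ) < (Real.sqrt 3 / 2) * l) :
    4*(β:ℤ)^2 < 3*(l:ℤ)^2 := by
  have h3 : Real.sqrt 3 ^ 2 = 3 := Real.sq_sqrt (by norm_num)
  have hβ0 : (0:ℝ) ≤ (β:ℝ) := by positivity
  have hr : 4*(β:ℝ)^2 < 3*(l:ℝ)^2 := by nlinarith [h, hβ0, h3]
  exact_mod_cast hr

lemma sqlt_of_sq {x y : ℝ} (hx : 0 ≤ x) (hy : 0 ≤ y) (h : x^2 < y^2) : x < y := by
  nlinarith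

/-- For every prime `ℓ` and every positive integer `β < (√3/2)ℓ` that is
primitively represented by the Eisenstein norm form `x² − xy + y²`, there is
an index-`ℓ` sublattice `M` of `ℤ[ω]` whose minimal nonzero squared length is
`β` and whose minimal vectors form exactly one pair `±v`. -/
theorem exists_three_and_one_form (ℓ : ℕ) (hℓ : ℓ.Prime)
    (β : ℕ) (hβpos : 0 < β) (hβlt : (β : ℝ) < (Real.sqrt 3 / 2) * ℓ)
    (hrep : ∃ a b : ℤ, IsCoprime a b ∧ (β : ℤ) = a ^ 2 - a * b + b ^ 2) :
    ∃ M : AddSubgroup ℂ,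
      M ≤ Eisenstein ∧ (M.addSubgroupOf Eisenstein).index = ℓ ∧
      ∃ v : ℂ, v ∈ M ∧ v ≠ 0 ∧ ‖v‖ ^ 2 = (β : ℝ) ∧
        ∀ u ∈ M, u ≠ 0 → u ≠ v → u ≠ -v → ‖v‖ < ‖u‖ := by
  haveI : NeZero ℓ := ⟨hℓ.pos.ne'⟩
  obtain ⟨a, b, hcop, hab⟩ := hrep
  have hβ0Z : (0:ℤ) < β := by exact_mod_cast hβpos
  have h4β3ℓ : 4*(β:ℤ)^2 < 3*(ℓ:ℤ)^2 := beta_sq_bound hβlt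
  obtain ⟨p, q, hpq⟩ := hcop
  set c : ℤ := -q with hc
  set d : ℤ := p with hd
  have hdet : a * d - b * c = 1 := by rw [hc, hd]; linear_combination hpq
  set V : ℂ := (a:ℂ) + (b:ℂ) * ω with hV
  set W : ℂ := (c:ℂ) + (d:ℂ) * ω with hW
  set M : AddSubgroup ℂ := AddSubgroup.closure {V, (ℓ:ℂ) * W} with hM
  -- membership description of M
  have memM : ∀ u : ℂ, u ∈ M ↔ ∃ m n : ℤ,
      u = ((m*a + n*(ℓ:ℤ)*c : ℤ) : ℂ) + ((m*b + n*(ℓ:ℤ)*d : ℤ) : ℂ) * ω := by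
    intro u
    rw [hM, AddSubgroup.mem_closure_pair]
    constructor
    · rintro ⟨m, n, rfl⟩
      exact ⟨m, n, by push_cast [zsmul_eq_mul, hV, hW]; ring⟩
    · rintro ⟨m, n, rfl⟩
      exact ⟨m, n, by push_cast [zsmul_eq_mul, hV, hW]; ring⟩
  have hMle : M ≤ Eisenstein := by
    rw [hM, AddSubgroup.closure_le]
    rintro z (rfl | rfl)
    · exact eisen_mem a b
    · have : (ℓ:ℂ) * W = ((ℓ*c : ℤ):ℂ) + ((ℓ*d : ℤ):ℂ) * ω := by
        push_cast [hW]; ring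
      rw [this]; exact eisen_mem _ _
  -- the coordinate functional ψ : ℂ → ℝ, computing the W-coordinate
  set ψ : ℂ → ℝ := fun z =>
    a * (2 * z.im / Real.sqrt 3) - b * (z.re + z.im / Real.sqrt 3) with hψ
  have h3ne : Real.sqrt 3 ≠ 0 := by positivity
  have ψ_coord : ∀ x y : ℤ, ψ ((x:ℂ) + (y:ℂ) * ω) = ((a*y - b*x : ℤ) : ℝ) := by
    intro x y
    simp only [hψ, Complex.add_re, Complex.add_im, Complex.mul_re, Complex.mul_im,
      Complex.intCast_re, Complex.intCast_im, ω_re, ω_im]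
    push_cast
    field_simp
    ring
  have ψ_add : ∀ z w : ℂ, ψ (z + w) = ψ z + ψ w := by
    intro z w; simp only [hψ, Complex.add_re, Complex.add_im]; ring
  -- the homomorphism φ : Eisenstein →+ ZMod ℓ
  set φ : Eisenstein →+ ZMod ℓ :=
    { toFun := fun z => ((round (ψ (z : ℂ)) : ℤ) : ZMod ℓ)
      map_zero' := by
        have : ψ 0 = 0 := by simp [hψ]
        simp [this]
      map_add' := by
        rintro ⟨z₁, hz₁⟩ ⟨z₂, hz₂⟩
        obtain ⟨x₁, y₁, rfl⟩ := eisen_elim hz₁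
        obtain ⟨x₂, y₂, rfl⟩ := eisen_elim hz₂
        simp only [AddSubgroup.coe_add]
        have e : ((x₁:ℂ) + (y₁:ℂ)*ω) + ((x₂:ℂ) + (y₂:ℂ)*ω)
            = ((x₁+x₂ : ℤ):ℂ) + ((y₁+y₂ : ℤ):ℂ)*ω := by push_cast; ring
        rw [e, ψ_coord, ψ_coord, ψ_coord, round_intCast, round_intCast, round_intCast]
        push_cast; ring } with hφ
  have φ_apply : ∀ (z : ℂ) (hz : z ∈ Eisenstein),
      φ ⟨z, hz⟩ = ((round (ψ z) : ℤ) : ZMod ℓ) := fun _ _ => rfl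
  -- the kernel of φ is M ∩ Eisenstein
  have hker : M.addSubgroupOf Eisenstein = φ.ker := by
    ext z
    obtain ⟨z, hz⟩ := z
    rw [AddSubgroup.mem_addSubgroupOf, AddMonoidHom.mem_ker, φ_apply]
    constructor
    · intro hzM
      obtain ⟨m, n, rfl⟩ := (memM z).mp hzM
      rw [ψ_coord, round_intCast]
      have : a*(m*b + n*(ℓ:ℤ)*d) - b*(m*a + n*(ℓ:ℤ)*c) = n * (ℓ:ℤ) := by
        linear_combination n * (ℓ:ℤ) * hdet
      rw [this]
      simp
    · intro h0
      obtain ⟨x, y, rfl⟩ := eisen_elim hz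
      rw [ψ_coord, round_intCast] at h0
      have hdvd : (ℓ:ℤ) ∣ (a*y - b*x) := (ZMod.intCast_zmod_eq_zero_iff_dvd _ ℓ).mp h0
      obtain ⟨k, hk⟩ := hdvd
      apply (memM _).mpr
      refine ⟨d*x - c*y, k, ?_⟩
      have hX : (d*x - c*y)*a + k*(ℓ:ℤ)*c = x := by linear_combination x*hdet - c*hk
      have hY : (d*x - c*y)*b + k*(ℓ:ℤ)*d = y := by linear_combination y*hdet - d*hk
      push_cast
      have hXc : ((d:ℂ)*x - c*y)*a + k*(ℓ:ℂ)*c = x := by exact_mod_cast hX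
      have hYc : ((d:ℂ)*x - c*y)*b + k*(ℓ:ℂ)*d = y := by exact_mod_cast hY
      linear_combination (-1 : ℂ) * hXc + (-ω) * hYc
  -- surjectivity of φ
  have hWE : W ∈ Eisenstein := eisen_mem c d
  have hφW : φ ⟨W, hWE⟩ = 1 := by
    rw [φ_apply, hW, ψ_coord, round_intCast, hdet]
    simp
  have hsurj : Function.Surjective φ := by
    intro t
    refine ⟨(t.val : ℤ) • ⟨W, hWE⟩, ?_⟩
    rw [map_zsmul, hφW, zsmul_one]
    simp [ZMod.natCast_val, ZMod.cast_id]
  -- index computation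
  have hindex : (M.addSubgroupOf Eisenstein).index = ℓ := by
    rw [hker, AddSubgroup.index_ker, AddMonoidHom.range_eq_top.mpr hsurj,
      AddSubgroup.card_top, Nat.card_zmod]
  have habsV : ‖V‖ ^ 2 = (β:ℝ) := by
    have h := normSq_eisen (a:ℝ) (b:ℝ)
    push_cast at h
    rw [hV, h]
    exact_mod_cast hab.symm
  refine ⟨M, hMle, hindex, V, ?_, ?_, habsV, ?_⟩
  · exact AddSubgroup.subset_closure (Set.mem_insert _ _)
  · -- V ≠ 0
    intro h0
    have hβne : (β:ℝ) ≠ 0 := by positivity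
    apply hβne
    rw [← habsV, h0]
    simp
  · intro u huM hu0 huV huV'
    obtain ⟨m, n, rfl⟩ := (memM u).mp huM
    set X : ℤ := m*a + n*(ℓ:ℤ)*c with hX
    set Y : ℤ := m*b + n*(ℓ:ℤ)*d with hY
    have habsu : ‖((X:ℂ) + (Y:ℂ)*ω)‖ ^ 2 = ((X^2 - X*Y + Y^2 : ℤ) : ℝ) := by
      have h := normSq_eisen (X:ℝ) (Y:ℝ)
      push_cast at h
      rw [h]; push_cast; ring
    have key : (β:ℤ) < X^2 - X*Y + Y^2 := by
      by_cases hn : n = 0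
      · -- u = m • V
        have hm0 : m ≠ 0 := by
          rintro rfl
          apply hu0
          simp [hX, hY, hn]
        have hm1 : m ≠ 1 := by
          rintro rfl
          apply huV
          rw [hV]; push_cast [hX, hY, hn]; ring
        have hm1' : m ≠ -1 := by
          rintro rfl
          apply huV'
          rw [hV]; push_cast [hX, hY, hn]; ring
        have hXm : X = m*a := by rw [hX, hn]; ring
        have hYm : Y = m*b := by rw [hY, hn]; ring
        rw [hXm, hYm]
        exact key_case1 m a b β hβ0Z hab (int_four_le_sq hm0 hm1 hm1')
      · -- n ≠ 0 : use the lower bound from the determinant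
        have hcross : Y*a - X*b = n*(ℓ:ℤ) := by
          rw [hX, hY]; linear_combination n * (ℓ:ℤ) * hdet
        exact key_case2 X Y a b n (ℓ:ℤ) β hβ0Z hab hcross (int_one_le_sq hn) h4β3ℓ
    have hkeyR : (β:ℝ) < ((X^2 - X*Y + Y^2 : ℤ) : ℝ) := by exact_mod_cast key
    have h1 : ‖V‖ ^ 2 < ‖((X:ℂ) + (Y:ℂ)*ω)‖ ^ 2 := by
      rw [habsV, habsu]; exact hkeyR
    exact sqlt_of_sq (norm_nonneg V) (norm_nonneg _) h1
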